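/- Let n ≥ 1, let e : ℝ → ℝⁿ be continuous, and let t, h ∈ ℝ with h ≥ 0. Define I₁ = ∫₀^h ζ ⟨ e(t+ζ), ∫₀^ζ e(t+ξ) dξ ⟩ dζ. Then ∫₀^h ⟨ e(t+ζ), ∫₀^ζ ( ∫₀^ξ ( e(t+χ) − e(t+ξ) ) dχ ) dξ ⟩ dζ = 3 I₁ − 2 ⟨ ∫₀^h e(t+ζ) dζ, ∫₀^h ζ e(t+ζ) dζ ⟩. -/

import Mathlib

open scoped RealInnerProductSpace
open intervalIntegral

section aux
variable {E : Type*} [NormedAddCommGroup E] [NormedSpace ℝ E] [CompleteSpace E]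

lemma prim_hasDerivAt {f : ℝ → E} (hf : Continuous f) (x : ℝ) :
    HasDerivAt (fun u => ∫ s in (0:ℝ)..u, f s) (f x) x :=
  integral_hasDerivAt_right (hf.intervalIntegrable 0 x)
    hf.stronglyMeasurable.stronglyMeasurableAtFilter hf.continuousAt

lemma prim_continuous {f : ℝ → E} (hf : Continuous f) :
    Continuous (fun u => ∫ s in (0:ℝ)..u, f s) := by
  have : Differentiable ℝ (fun u => ∫ s in (0:ℝ)..u, f s) :=
    fun x => (prim_hasDerivAt hf x).differentiableAt
  exact this.continuous

/-- integration by parts: ∫₀^s (∫₀^ξ f) dξ = s • ∫₀^s f − ∫₀^s ξ • f ξ -/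
lemma parts {f : ℝ → E} (hf : Continuous f) (s : ℝ) :
    (∫ ξ in (0:ℝ)..s, ∫ χ in (0:ℝ)..ξ, f χ)
      = s • (∫ ξ in (0:ℝ)..s, f ξ) - ∫ ξ in (0:ℝ)..s, ξ • f ξ := by
  have hsm : Continuous (fun ξ : ℝ => ξ • f ξ) := continuous_id.smul hf
  have key : ∀ x y : ℝ,
      ((∫ ξ in (0:ℝ)..x, ∫ χ in (0:ℝ)..ξ, f χ) - x • (∫ ξ in (0:ℝ)..x, f ξ)
        + ∫ ξ in (0:ℝ)..x, ξ • f ξ)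
      = ((∫ ξ in (0:ℝ)..y, ∫ χ in (0:ℝ)..ξ, f χ) - y • (∫ ξ in (0:ℝ)..y, f ξ)
        + ∫ ξ in (0:ℝ)..y, ξ • f ξ) := by
    apply is_const_of_deriv_eq_zero
    · intro x
      exact (((prim_hasDerivAt (prim_continuous hf) x).sub
        ((hasDerivAt_id x).smul (prim_hasDerivAt hf x))).add
        (prim_hasDerivAt hsm x)).differentiableAt
    · intro x
      have h1 : HasDerivAt (fun u => ((∫ ξ in (0:ℝ)..u, ∫ χ in (0:ℝ)..ξ, f χ)
          - u • (∫ ξ in (0:ℝ)..u, f ξ) + ∫ ξ in (0:ℝ)..u, ξ • f ξ))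
          ((∫ χ in (0:ℝ)..x, f χ) - (x • f x + (1:ℝ) • (∫ ξ in (0:ℝ)..x, f ξ)) + x • f x) x :=
        ((prim_hasDerivAt (prim_continuous hf) x).sub
          ((hasDerivAt_id x).smul (prim_hasDerivAt hf x))).add (prim_hasDerivAt hsm x)
      have : ((∫ χ in (0:ℝ)..x, f χ) - (x • f x + (1:ℝ) • (∫ ξ in (0:ℝ)..x, f ξ)) + x • f x) = 0 := by
        simp
      rw [h1.deriv, this]
  have := key s 0
  simp only [intervalIntegral.integral_same, zero_smul, smul_zero, sub_zero, add_zero] at this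
  rw [sub_add_eq_add_sub, sub_eq_zero] at this
  exact eq_sub_of_add_eq this
end aux

theorem c32_integral_reduction (n : ℕ) (hn : 1 ≤ n) (e : ℝ → EuclideanSpace ℝ (Fin n))
    (he : Continuous e) (t h : ℝ) (hh : 0 ≤ h) :
    (∫ ζ in (0:ℝ)..h,
        ⟪e (t + ζ), ∫ ξ in (0:ℝ)..ζ, ∫ χ in (0:ℝ)..ξ, (e (t + χ) - e (t + ξ))⟫)
      = 3 * (∫ ζ in (0:ℝ)..h, ζ * ⟪e (t + ζ), ∫ ξ in (0:ℝ)..ζ, e (t + ξ)⟫)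
        - 2 * ⟪∫ ζ in (0:ℝ)..h, e (t + ζ), ∫ ζ in (0:ℝ)..h, ζ • e (t + ζ)⟫ := by
  have hf : Continuous fun ζ : ℝ => e (t + ζ) := he.comp (continuous_const.add continuous_id)
  have hE : Continuous fun s : ℝ => ∫ ξ in (0:ℝ)..s, e (t + ξ) := prim_continuous hf
  have hsm : Continuous fun ξ : ℝ => ξ • e (t + ξ) := continuous_id.smul hf
  have hF : Continuous fun s : ℝ => ∫ ξ in (0:ℝ)..s, ξ • e (t + ξ) := prim_continuous hsm
  have hi1 : Continuous fun ζ : ℝ => ζ * ⟪e (t + ζ), ∫ ξ in (0:ℝ)..ζ, e (t + ξ)⟫ :=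
    continuous_id.mul (hf.inner hE)
  have hi2 : Continuous fun ζ : ℝ => ⟪e (t + ζ), ∫ ξ in (0:ℝ)..ζ, ξ • e (t + ξ)⟫ :=
    hf.inner hF
  have step1 : ∀ ζ : ℝ, (∫ ξ in (0:ℝ)..ζ, ∫ χ in (0:ℝ)..ξ, (e (t + χ) - e (t + ξ)))
      = ζ • (∫ ξ in (0:ℝ)..ζ, e (t + ξ)) - (2:ℝ) • ∫ ξ in (0:ℝ)..ζ, ξ • e (t + ξ) := by
    intro ζ
    have h1 : ∀ ξ : ℝ, (∫ χ in (0:ℝ)..ξ, (e (t + χ) - e (t + ξ)))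
        = (∫ χ in (0:ℝ)..ξ, e (t + χ)) - ξ • e (t + ξ) := by
      intro ξ
      rw [intervalIntegral.integral_sub (hf.intervalIntegrable 0 ξ)
        intervalIntegrable_const, intervalIntegral.integral_const]
      simp
    simp_rw [h1]
    rw [intervalIntegral.integral_sub (hE.intervalIntegrable 0 ζ) (hsm.intervalIntegrable 0 ζ),
      parts hf ζ, two_smul]
    abel
  have key : ⟪∫ ζ in (0:ℝ)..h, e (t + ζ), ∫ ζ in (0:ℝ)..h, ζ • e (t + ζ)⟫
      = ∫ ζ in (0:ℝ)..h, (⟪e (t + ζ), ∫ ξ in (0:ℝ)..ζ, ξ • e (t + ξ)⟫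
          + ζ * ⟪e (t + ζ), ∫ ξ in (0:ℝ)..ζ, e (t + ξ)⟫) := by
    have hd : ∀ x ∈ Set.uIcc (0:ℝ) h,
        HasDerivAt (fun s => ⟪∫ ξ in (0:ℝ)..s, e (t + ξ), ∫ ξ in (0:ℝ)..s, ξ • e (t + ξ)⟫)
          (⟪e (t + x), ∫ ξ in (0:ℝ)..x, ξ • e (t + ξ)⟫
            + x * ⟪e (t + x), ∫ ξ in (0:ℝ)..x, e (t + ξ)⟫) x := by
      intro x _
      have := HasDerivAt.inner ℝ (prim_hasDerivAt hf x) (prim_hasDerivAt hsm x)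
      refine this.congr_deriv ?_
      rw [real_inner_smul_right, real_inner_comm (∫ ξ in (0:ℝ)..x, e (t + ξ)) (e (t + x))]
      ring
    have := intervalIntegral.integral_eq_sub_of_hasDerivAt hd
      ((hi2.add hi1).intervalIntegrable 0 h)
    rw [this]
    simp
  simp_rw [step1, inner_sub_right, real_inner_smul_right]
  rw [intervalIntegral.integral_sub (hi1.intervalIntegrable 0 h)
      ((hi2.intervalIntegrable 0 h).const_mul 2),
    intervalIntegral.integral_const_mul, key,
    intervalIntegral.integral_add (hi2.intervalIntegrable 0 h) (hi1.intervalIntegrable 0 h)]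
  ring
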